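/- Let A > 0 and n > 0 be real numbers and define g(u) = (u³ − A·u²)·e^{−n·u}. Then no line is tangent to the graph of g at two distinct positive points: there do not exist reals λ, μ and u₁, u₂ with 0 < u₁ < u₂ such that g(u᾽) = λ·u᾽ + μ and g′(u᾽) = λ for both u᾽ = u₁ and u᾽ = u₂. -/

import Mathlib

set_option maxHeartbeats 1000000

open Real

/-- Derivative of `g`. -/
lemma hasDerivAt_g (A n u : ℝ) :
    HasDerivAt (fun u : ℝ => (u ^ 3 - A * u ^ 2) * Real.exp (-n * u))
      (((3 * u ^ 2 - 2 * A * u) - n * (u ^ 3 - A * u ^ 2)) * Real.exp (-n * u)) u := by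
  have h1 : HasDerivAt (fun u : ℝ => u ^ 3 - A * u ^ 2) (3 * u ^ 2 - 2 * A * u) u := by
    have := (hasDerivAt_pow 3 u).sub ((hasDerivAt_pow 2 u).const_mul A)
    refine this.congr_deriv ?_
    push_cast
    ring
  have h2 : HasDerivAt (fun u : ℝ => Real.exp (-n * u)) (-n * Real.exp (-n * u)) u := by
    have h := ((hasDerivAt_id u).const_mul (-n)).exp
    simpa [mul_comm] using h
  have := h1.mul h2
  refine this.congr_deriv ?_
  ring

/-- Key polynomial inequality. -/
lemma key_ineq {s t : ℝ} (hs : 0 < s) (hst : s < t) :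
    s * (s ^ 2 - 2 * s + 2) * (t ^ 2 - 4 * t + 6)
      < t * (t ^ 2 - 2 * t + 2) * (s ^ 2 - 4 * s + 6) := by
  have ht : 0 < t := hs.trans hst
  have h1 : 0 < t - s := sub_pos.2 hst
  nlinarith [mul_nonneg h1.le (sq_nonneg (s * t - 2 * s - 2 * t + 2)),
    mul_nonneg h1.le (sq_nonneg (t - 1)), mul_nonneg h1.le (sq_nonneg (s - 1)),
    mul_pos h1 (mul_pos hs ht), h1]

/-- **No double tangent line.** For `A, n > 0` and `g(u) = (u³ - A u²) e^{-nu}`,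
no line is tangent to the graph of `g` at two distinct positive points. -/
theorem no_double_tangent (A n : ℝ) (hA : 0 < A) (hn : 0 < n) :
    ¬ ∃ (lam mu u₁ u₂ : ℝ), 0 < u₁ ∧ u₁ < u₂ ∧
      (fun u : ℝ => (u ^ 3 - A * u ^ 2) * Real.exp (-n * u)) u₁ = lam * u₁ + mu ∧
      deriv (fun u : ℝ => (u ^ 3 - A * u ^ 2) * Real.exp (-n * u)) u₁ = lam ∧
      (fun u : ℝ => (u ^ 3 - A * u ^ 2) * Real.exp (-n * u)) u₂ = lam * u₂ + mu ∧
      deriv (fun u : ℝ => (u ^ 3 - A * u ^ 2) * Real.exp (-n * u)) u₂ = lam := by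
  rintro ⟨lam, mu, u₁, u₂, hu₁, h12, hg1, hd1, hg2, hd2⟩
  simp only at hg1 hg2
  have hu₂ : 0 < u₂ := hu₁.trans h12
  -- replace deriv facts by formulas
  have hd1' : ((3 * u₁ ^ 2 - 2 * A * u₁) - n * (u₁ ^ 3 - A * u₁ ^ 2)) * Real.exp (-n * u₁) = lam := by
    rw [← hd1]; exact ((hasDerivAt_g A n u₁).deriv).symm
  have hd2' : ((3 * u₂ ^ 2 - 2 * A * u₂) - n * (u₂ ^ 3 - A * u₂ ^ 2)) * Real.exp (-n * u₂) = lam := by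
    rw [← hd2]; exact ((hasDerivAt_g A n u₂).deriv).symm
  -- auxiliary functions
  set F : ℝ → ℝ := fun u => u - A - (lam * u + mu) * Real.exp (n * u) / u ^ 2 with hF
  set D : ℝ → ℝ := fun u =>
    1 - Real.exp (n * u) * (lam * u + n * (lam * u + mu) * u - 2 * (lam * u + mu)) / u ^ 3 with hDdef
  set D₂ : ℝ → ℝ := fun u =>
    -(Real.exp (n * u) * (lam * u * (n ^ 2 * u ^ 2 - 2 * n * u + 2)
      + mu * (n ^ 2 * u ^ 2 - 4 * n * u + 6))) / u ^ 4 with hD2def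
  -- derivative of F
  have hFD : ∀ u : ℝ, 0 < u → HasDerivAt F (D u) u := by
    intro u hu
    have hnum : HasDerivAt (fun u : ℝ => (lam * u + mu) * Real.exp (n * u))
        (lam * Real.exp (n * u) + (lam * u + mu) * (n * Real.exp (n * u))) u := by
      have ha : HasDerivAt (fun u : ℝ => lam * u + mu) lam u := by
        simpa using ((hasDerivAt_id u).const_mul lam).add_const mu
      have hb : HasDerivAt (fun u : ℝ => Real.exp (n * u)) (n * Real.exp (n * u)) u := by
        have h := ((hasDerivAt_id u).const_mul n).exp
        simpa [mul_comm] using h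
      exact ha.mul hb
    have hden : HasDerivAt (fun u : ℝ => u ^ 2) (2 * u) u := by
      simpa using (hasDerivAt_pow 2 u)
    have hq := hnum.div hden (by positivity)
    have := ((hasDerivAt_id u).sub_const A).sub hq
    refine this.congr_deriv ?_
    rw [hDdef]
    have hu0 : u ≠ 0 := ne_of_gt hu
    field_simp
  -- derivative of D
  have hDD : ∀ u : ℝ, 0 < u → HasDerivAt D (D₂ u) u := by
    intro u hu
    have hnum : HasDerivAt
        (fun u : ℝ => Real.exp (n * u) * (lam * u + n * (lam * u + mu) * u - 2 * (lam * u + mu)))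
        (n * Real.exp (n * u) * (lam * u + n * (lam * u + mu) * u - 2 * (lam * u + mu))
          + Real.exp (n * u) * (lam + n * (2 * lam * u + mu) - 2 * lam)) u := by
      have hb : HasDerivAt (fun u : ℝ => Real.exp (n * u)) (n * Real.exp (n * u)) u := by
        have h := ((hasDerivAt_id u).const_mul n).exp
        simpa [mul_comm] using h
      have ha : HasDerivAt (fun u : ℝ => lam * u + n * (lam * u + mu) * u - 2 * (lam * u + mu))
          (lam + n * (2 * lam * u + mu) - 2 * lam) u := by
        have hfun : (fun u : ℝ => lam * u + n * (lam * u + mu) * u - 2 * (lam * u + mu))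
            = (fun u : ℝ => n * lam * u ^ 2 + (n * mu - lam) * u - 2 * mu) := by
          funext x; ring
        rw [hfun]
        have h1 := ((hasDerivAt_pow 2 u).const_mul (n * lam))
        have h2 := ((hasDerivAt_id u).const_mul (n * mu - lam))
        have h3 := (h1.add h2).sub_const (2 * mu)
        refine h3.congr_deriv ?_
        push_cast; ring
      exact hb.mul ha
    have hden : HasDerivAt (fun u : ℝ => u ^ 3) (3 * u ^ 2) u := by
      simpa using (hasDerivAt_pow 3 u)
    have hq := hnum.div hden (by positivity)
    have := (hasDerivAt_const u (1 : ℝ)).sub hq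
    refine this.congr_deriv ?_
    rw [hD2def]
    have hu0 : u ≠ 0 := ne_of_gt hu
    field_simp
    ring
  have hexp : ∀ u : ℝ, Real.exp (n * u) * Real.exp (-n * u) = 1 := by
    intro u
    rw [← Real.exp_add]
    simp
  -- F vanishes at u₁, u₂
  have hF1 : F u₁ = 0 := by
    rw [hF]
    have h : (lam * u₁ + mu) * Real.exp (n * u₁) = u₁ ^ 3 - A * u₁ ^ 2 := by
      rw [← hg1]
      calc (u₁ ^ 3 - A * u₁ ^ 2) * Real.exp (-n * u₁) * Real.exp (n * u₁)
          = (u₁ ^ 3 - A * u₁ ^ 2) * (Real.exp (n * u₁) * Real.exp (-n * u₁)) := by ring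
        _ = u₁ ^ 3 - A * u₁ ^ 2 := by rw [hexp u₁]; ring
    simp only [h]
    field_simp
    ring
  have hF2 : F u₂ = 0 := by
    rw [hF]
    have h : (lam * u₂ + mu) * Real.exp (n * u₂) = u₂ ^ 3 - A * u₂ ^ 2 := by
      rw [← hg2]
      calc (u₂ ^ 3 - A * u₂ ^ 2) * Real.exp (-n * u₂) * Real.exp (n * u₂)
          = (u₂ ^ 3 - A * u₂ ^ 2) * (Real.exp (n * u₂) * Real.exp (-n * u₂)) := by ring
        _ = u₂ ^ 3 - A * u₂ ^ 2 := by rw [hexp u₂]; ring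
    simp only [h]
    field_simp
    ring
  -- D vanishes at u₁, u₂
  have hDarg : ∀ v : ℝ, 0 < v →
      (v ^ 3 - A * v ^ 2) * Real.exp (-n * v) = lam * v + mu →
      ((3 * v ^ 2 - 2 * A * v) - n * (v ^ 3 - A * v ^ 2)) * Real.exp (-n * v) = lam →
      D v = 0 := by
    intro v hv hg hd
    rw [hDdef]
    simp only
    have hE := hexp v
    have hnum : Real.exp (n * v) * (lam * v + n * (lam * v + mu) * v - 2 * (lam * v + mu))
        = v ^ 3 := by
      linear_combination (Real.exp (n * v) * (n * v - 2)) * hg.symm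
        + (Real.exp (n * v) * v) * hd.symm
        + ((n * v - 2) * (v ^ 3 - A * v ^ 2)
            + v * ((3 * v ^ 2 - 2 * A * v) - n * (v ^ 3 - A * v ^ 2))) * hE
    rw [hnum]
    field_simp
    norm_num
  have hD1 : D u₁ = 0 := hDarg u₁ hu₁ hg1 hd1'
  have hD2 : D u₂ = 0 := hDarg u₂ hu₂ hg2 hd2'
  -- Rolle for F on [u₁, u₂]
  have hcontF : ContinuousOn F (Set.Icc u₁ u₂) := fun x hx =>
    ((hFD x (lt_of_lt_of_le hu₁ hx.1)).continuousAt).continuousWithinAt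
  obtain ⟨c, hc, hDc⟩ := exists_hasDerivAt_eq_zero h12 hcontF (hF1.trans hF2.symm)
    (fun x hx => hFD x (hu₁.trans hx.1))
  -- Rolle for D on [u₁, c] and [c, u₂]
  have hcontD1 : ContinuousOn D (Set.Icc u₁ c) := fun x hx =>
    ((hDD x (lt_of_lt_of_le hu₁ hx.1)).continuousAt).continuousWithinAt
  obtain ⟨x₁, hx₁, hDx₁⟩ := exists_hasDerivAt_eq_zero hc.1 hcontD1 (hD1.trans hDc.symm)
    (fun x hx => hDD x (hu₁.trans hx.1))
  have hcontD2 : ContinuousOn D (Set.Icc c u₂) := fun x hx =>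
    ((hDD x (lt_of_lt_of_le (hu₁.trans hc.1) hx.1)).continuousAt).continuousWithinAt
  obtain ⟨x₂, hx₂, hDx₂⟩ := exists_hasDerivAt_eq_zero hc.2 hcontD2 (hDc.trans hD2.symm)
    (fun x hx => hDD x ((hu₁.trans hc.1).trans hx.1))
  -- positivity
  have hx₁pos : 0 < x₁ := hu₁.trans hx₁.1
  have hx₂pos : 0 < x₂ := (hu₁.trans hc.1).trans hx₂.1
  have hx₁₂ : x₁ < x₂ := hx₁.2.trans hx₂.1
  -- extract the polynomial equations
  have heq : ∀ x : ℝ, 0 < x → D₂ x = 0 →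
      lam * x * (n ^ 2 * x ^ 2 - 2 * n * x + 2) + mu * (n ^ 2 * x ^ 2 - 4 * n * x + 6) = 0 := by
    intro x hx h
    rw [hD2def] at h
    simp only at h
    have hx4 : (x : ℝ) ^ 4 ≠ 0 := by positivity
    have hE : Real.exp (n * x) ≠ 0 := (Real.exp_pos _).ne'
    have h1 := (div_eq_zero_iff.mp h).resolve_right hx4
    have h2 : Real.exp (n * x) * (lam * x * (n ^ 2 * x ^ 2 - 2 * n * x + 2)
        + mu * (n ^ 2 * x ^ 2 - 4 * n * x + 6)) = 0 := neg_eq_zero.mp h1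
    exact (mul_eq_zero.mp h2).resolve_left hE
  have e₁ := heq x₁ hx₁pos hDx₁
  have e₂ := heq x₂ hx₂pos hDx₂
  -- rescale: s = n x₁, t = n x₂
  set s := n * x₁ with hs'
  set t := n * x₂ with ht'
  have hspos : 0 < s := mul_pos hn hx₁pos
  have hstlt : s < t := by
    rw [hs', ht']
    exact mul_lt_mul_of_pos_left hx₁₂ hn
  have f₁ : lam * s * (s ^ 2 - 2 * s + 2) + (n * mu) * (s ^ 2 - 4 * s + 6) = 0 := by
    rw [hs']
    linear_combination n * e₁
  have f₂ : lam * t * (t ^ 2 - 2 * t + 2) + (n * mu) * (t ^ 2 - 4 * t + 6) = 0 := by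
    rw [ht']
    linear_combination n * e₂
  have hqs : 0 < s ^ 2 - 4 * s + 6 := by nlinarith [sq_nonneg (s - 2)]
  have hqt : 0 < t ^ 2 - 4 * t + 6 := by nlinarith [sq_nonneg (t - 2)]
  have hkey := key_ineq hspos hstlt
  -- conclude lam = 0 and mu = 0
  have hlam : lam = 0 := by
    have hz : lam * (s * (s ^ 2 - 2 * s + 2) * (t ^ 2 - 4 * t + 6)
        - t * (t ^ 2 - 2 * t + 2) * (s ^ 2 - 4 * s + 6)) = 0 := by
      linear_combination (t ^ 2 - 4 * t + 6) * f₁ - (s ^ 2 - 4 * s + 6) * f₂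
    rcases mul_eq_zero.1 hz with h | h
    · exact h
    · exact absurd h (ne_of_lt (by linarith))
  have hmu : mu = 0 := by
    have : (n * mu) * (s ^ 2 - 4 * s + 6) = 0 := by
      linear_combination f₁ - s * (s ^ 2 - 2 * s + 2) * hlam
    rcases mul_eq_zero.1 this with h | h
    · rcases mul_eq_zero.1 h with h' | h'
      · exact absurd h' (ne_of_gt hn)
      · exact h'
    · exact absurd h (ne_of_gt hqs)
  -- contradiction with D u₁ = 0
  rw [hDdef] at hD1
  simp only [hlam, hmu] at hD1
  norm_num at hD1
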